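/- In a structured Haar scattering on a graph, each coefficient S_J x(n,q) for 0 ≤ q < 2^J depends only on the restriction of x to the vertex set V_{J,n} of cardinality 2^J, and the vector (S_J x(n,q))_{0 ≤ q < 2^J} is obtained by applying to x restricted to V_{J,n} a matrix all of whose entries are ±1 (a Hadamard-type matrix depending on x, J and n). -/
import Mathlib

/-- Structured Haar scattering on a graph: `S_0 x(n,0) = x(n)` and, with row
pairing `π j` at layer `j`,
`S_{j+1} x(n,2q) = S_j x(π_j(2n),q) + S_j x(π_j(2n+1),q)` and
`S_{j+1} x(n,2q+1) = |S_j x(π_j(2n),q) − S_j x(π_j(2n+1),q)|`. -/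
noncomputable def structScat (π : ℕ → ℕ → ℕ) (x : ℕ → ℝ) : ℕ → ℕ → ℕ → ℝ
  | 0, n, _ => x n
  | (j + 1), n, q =>
      if q % 2 = 0 then
        structScat π x j (π j (2 * n)) (q / 2) + structScat π x j (π j (2 * n + 1)) (q / 2)
      else
        |structScat π x j (π j (2 * n)) (q / 2) - structScat π x j (π j (2 * n + 1)) (q / 2)|

/-- The hierarchical vertex sets: `V_{0,n} = {n}` and
`V_{j+1,n} = V_{j,π_j(2n)} ∪ V_{j,π_j(2n+1)}`. -/
def Vset (π : ℕ → ℕ → ℕ) : ℕ → ℕ → Finset ℕ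
  | 0, n => {n}
  | (j + 1), n => Vset π j (π j (2 * n)) ∪ Vset π j (π j (2 * n + 1))

lemma Vset_disjoint (K : ℕ) (π : ℕ → ℕ → ℕ)
    (hbd : ∀ j m, m < 2 ^ (K - j) → π j m < 2 ^ (K - j))
    (hinj : ∀ j, Set.InjOn (π j) (Set.Iio (2 ^ (K - j)))) :
    ∀ j, j ≤ K → ∀ m m', m < 2 ^ (K - j) → m' < 2 ^ (K - j) → m ≠ m' →
      Disjoint (Vset π j m) (Vset π j m') := by
  intro j
  induction j with
  | zero =>
    intro _ m m' _ _ hne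
    simp only [Vset, Finset.disjoint_singleton]
    exact hne
  | succ j ih =>
    intro hjK m m' hm hm' hne
    have hj : j ≤ K := Nat.le_of_succ_le hjK
    have h2 : 2 ^ (K - j) = 2 * 2 ^ (K - (j + 1)) := by
      rw [← pow_succ']
      congr 1
      omega
    have h2m : 2 * m < 2 ^ (K - j) := by omega
    have h2m1 : 2 * m + 1 < 2 ^ (K - j) := by omega
    have h2m' : 2 * m' < 2 ^ (K - j) := by omega
    have h2m1' : 2 * m' + 1 < 2 ^ (K - j) := by omega
    have key : ∀ a b, a < 2 ^ (K - j) → b < 2 ^ (K - j) → a ≠ b →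
        Disjoint (Vset π j (π j a)) (Vset π j (π j b)) := by
      intro a b ha hb hab
      exact ih hj _ _ (hbd j a ha) (hbd j b hb)
        (fun h => hab (hinj j (Set.mem_Iio.mpr ha) (Set.mem_Iio.mpr hb) h))
    show Disjoint (Vset π j (π j (2 * m)) ∪ Vset π j (π j (2 * m + 1)))
        (Vset π j (π j (2 * m')) ∪ Vset π j (π j (2 * m' + 1)))
    rw [Finset.disjoint_union_left, Finset.disjoint_union_right,
      Finset.disjoint_union_right]
    exact ⟨⟨key _ _ h2m h2m' (by omega), key _ _ h2m h2m1' (by omega)⟩,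
           key _ _ h2m1 h2m' (by omega), key _ _ h2m1 h2m1' (by omega)⟩

/-- Each structured Haar scattering coefficient `S_J x(n,q)`, `0 ≤ q < 2^J`,
depends only on the restriction of `x` to the set `V_{J,n}` of cardinality
`2^J`, through a matrix with entries `±1` (a Hadamard-type matrix depending on
`x`, `J` and `n`): `S_J x(n,q) = Σ_{v ∈ V_{J,n}} σ(q,v) x(v)` with
`σ(q,v) ∈ {1,−1}`. -/
theorem structScat_hadamard (K J : ℕ) (hJ : J ≤ K) (π : ℕ → ℕ → ℕ)
    (hbd : ∀ j m, m < 2 ^ (K - j) → π j m < 2 ^ (K - j))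
    (hinj : ∀ j, Set.InjOn (π j) (Set.Iio (2 ^ (K - j))))
    (x : ℕ → ℝ) (n : ℕ) (hn : n < 2 ^ (K - J)) :
    (Vset π J n).card = 2 ^ J ∧
    ∃ σ : ℕ → ℕ → ℝ, (∀ q v, σ q v = 1 ∨ σ q v = -1) ∧
      ∀ q < 2 ^ J, structScat π x J n q = ∑ v ∈ Vset π J n, σ q v * x v := by
  induction J generalizing n with
  | zero =>
    refine ⟨by simp [Vset], fun _ _ => 1, fun _ _ => Or.inl rfl, ?_⟩
    intro q hq
    simp [Vset, structScat]
  | succ J ih =>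
    have hJ' : J ≤ K := Nat.le_of_succ_le hJ
    have h2 : 2 ^ (K - J) = 2 * 2 ^ (K - (J + 1)) := by
      rw [← pow_succ']
      congr 1
      omega
    have h2n : 2 * n < 2 ^ (K - J) := by omega
    have h2n1 : 2 * n + 1 < 2 ^ (K - J) := by omega
    set n₁ := π J (2 * n) with hn₁
    set n₂ := π J (2 * n + 1) with hn₂
    have hb₁ : n₁ < 2 ^ (K - J) := hbd J _ h2n
    have hb₂ : n₂ < 2 ^ (K - J) := hbd J _ h2n1
    obtain ⟨hc₁, σ₁, hσ₁, hs₁⟩ := ih hJ' n₁ hb₁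
    obtain ⟨hc₂, σ₂, hσ₂, hs₂⟩ := ih hJ' n₂ hb₂
    have hne : n₁ ≠ n₂ := fun h =>
      (by omega : (2 : ℕ) * n ≠ 2 * n + 1)
        (hinj J (Set.mem_Iio.mpr h2n) (Set.mem_Iio.mpr h2n1) h)
    have hdisj : Disjoint (Vset π J n₁) (Vset π J n₂) :=
      Vset_disjoint K π hbd hinj J hJ' _ _ hb₁ hb₂ hne
    have hVeq : Vset π (J + 1) n = Vset π J n₁ ∪ Vset π J n₂ := rfl
    constructor
    · rw [hVeq, Finset.card_union_of_disjoint hdisj, hc₁, hc₂]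
      ring
    · set ε : ℕ → ℝ := fun q =>
        if 0 ≤ structScat π x J n₁ (q / 2) - structScat π x J n₂ (q / 2) then 1 else -1
        with hε
      have hεpm : ∀ q, ε q = 1 ∨ ε q = -1 := by
        intro q
        by_cases h : 0 ≤ structScat π x J n₁ (q / 2) - structScat π x J n₂ (q / 2)
        · left; simp only [hε]; rw [if_pos h]
        · right; simp only [hε]; rw [if_neg h]
      refine ⟨fun q v =>
        if q % 2 = 0 then (if v ∈ Vset π J n₁ then σ₁ (q / 2) v else σ₂ (q / 2) v)
        else ε q * (if v ∈ Vset π J n₁ then σ₁ (q / 2) v else -σ₂ (q / 2) v), ?_, ?_⟩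
      · intro q v
        by_cases hq : q % 2 = 0 <;> by_cases hv : v ∈ Vset π J n₁ <;>
          simp only [hq, hv, if_true, if_false, if_pos, if_neg] <;>
          [exact hσ₁ _ _; exact hσ₂ _ _;
           rcases hεpm q with h | h <;> rcases hσ₁ (q / 2) v with h' | h' <;>
             rw [h, h'] <;> norm_num;
           rcases hεpm q with h | h <;> rcases hσ₂ (q / 2) v with h' | h' <;>
             rw [h, h'] <;> norm_num]
      · intro q hq
        have hq2 : q / 2 < 2 ^ J := by
          have : (2 : ℕ) ^ (J + 1) = 2 * 2 ^ J := by rw [pow_succ]; ring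
          omega
        rw [hVeq, Finset.sum_union hdisj]
        have hsum₁ : ∀ f : ℕ → ℝ,
            (∑ v ∈ Vset π J n₁, (if v ∈ Vset π J n₁ then σ₁ (q / 2) v else f v) * x v)
              = ∑ v ∈ Vset π J n₁, σ₁ (q / 2) v * x v := by
          intro f
          exact Finset.sum_congr rfl fun v hv => by rw [if_pos hv]
        have hsum₂ : ∀ f : ℕ → ℝ,
            (∑ v ∈ Vset π J n₂, (if v ∈ Vset π J n₁ then f v else σ₂ (q / 2) v) * x v)
              = ∑ v ∈ Vset π J n₂, σ₂ (q / 2) v * x v := by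
          intro f
          refine Finset.sum_congr rfl fun v hv => ?_
          rw [if_neg (Finset.disjoint_right.mp hdisj hv)]
        by_cases hqe : q % 2 = 0
        · simp only [hqe, if_true]
          rw [show structScat π x (J + 1) n q =
            structScat π x J n₁ (q / 2) + structScat π x J n₂ (q / 2) by
               rw [structScat]; rw [if_pos hqe]]
          rw [hs₁ _ hq2, hs₂ _ hq2, hsum₁, hsum₂]
        · simp only [hqe, if_false]
          rw [show structScat π x (J + 1) n q =
            |structScat π x J n₁ (q / 2) - structScat π x J n₂ (q / 2)| by
               rw [structScat]; rw [if_neg hqe]]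
          have habs : |structScat π x J n₁ (q / 2) - structScat π x J n₂ (q / 2)|
              = ε q * (structScat π x J n₁ (q / 2) - structScat π x J n₂ (q / 2)) := by
            simp only [hε]
            by_cases h : 0 ≤ structScat π x J n₁ (q / 2) - structScat π x J n₂ (q / 2)
            · rw [abs_of_nonneg h, if_pos h, one_mul]
            · rw [abs_of_neg (lt_of_not_ge h), if_neg h]; ring
          rw [habs, hs₁ _ hq2, hs₂ _ hq2]
          have e₁ : (∑ v ∈ Vset π J n₁,
              (ε q * if v ∈ Vset π J n₁ then σ₁ (q / 2) v else -σ₂ (q / 2) v) * x v)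
              = ε q * ∑ v ∈ Vset π J n₁, σ₁ (q / 2) v * x v := by
            rw [Finset.mul_sum]
            exact Finset.sum_congr rfl fun v hv => by rw [if_pos hv]; ring
          have e₂ : (∑ v ∈ Vset π J n₂,
              (ε q * if v ∈ Vset π J n₁ then σ₁ (q / 2) v else -σ₂ (q / 2) v) * x v)
              = -(ε q * ∑ v ∈ Vset π J n₂, σ₂ (q / 2) v * x v) := by
            rw [Finset.mul_sum, ← Finset.sum_neg_distrib]
            refine Finset.sum_congr rfl fun v hv => ?_
            rw [if_neg (Finset.disjoint_right.mp hdisj hv)]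
            ring
          rw [e₁, e₂]
          ring
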